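/- For every integer p ≥ 1, the function g_p(x) := coth(px)/sinh(2x) − 1/(2p·sinh²(x)) tends to (p² − 1)/(6p) as x tends to 0 from the right. -/

import Mathlib

open Real Filter Topology

/-- The elliptic fixed-point integrand `g_p(x) = coth(px)/sinh(2x) - 1/(2p sinh²x)`. -/
noncomputable def ellipticIntegrand (p : ℕ) (x : ℝ) : ℝ :=
  Real.cosh (p * x) / Real.sinh (p * x) / Real.sinh (2 * x) -
    1 / (2 * p * Real.sinh x ^ 2)

lemma sinh_div_self_tendsto : Filter.Tendsto (fun t : ℝ => Real.sinh t / t)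
    (nhdsWithin 0 (Set.Ioi 0)) (nhds 1) := by
  have h := (Real.hasDerivAt_sinh 0)
  rw [hasDerivAt_iff_tendsto_slope] at h
  have h2 : Filter.Tendsto (fun t : ℝ => Real.sinh t / t)
      (nhdsWithin 0 {(0:ℝ)}ᶜ) (nhds 1) := by
    simpa [slope_fun_def, Real.sinh_zero, div_eq_mul_inv, mul_comm] using h
  exact h2.mono_left (nhdsWithin_mono _ (fun x hx => ne_of_gt hx))

lemma sinh_sub_id_div_cube : Filter.Tendsto (fun t : ℝ => (Real.sinh t - t) / t ^ 3)
    (nhdsWithin 0 (Set.Ioi 0)) (nhds (1 / 6)) := by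
  apply HasDerivAt.lhopital_zero_nhdsGT
    (f' := fun t => Real.cosh t - 1) (g' := fun t => 3 * t ^ 2)
  · filter_upwards with t
    exact ((Real.hasDerivAt_sinh t).sub (hasDerivAt_id t))
  · filter_upwards with t
    simpa using (hasDerivAt_pow 3 t)
  · filter_upwards [self_mem_nhdsWithin] with t ht
    have ht' : (0:ℝ) < t := ht
    positivity
  · have : Filter.Tendsto (fun t : ℝ => Real.sinh t - t) (nhds 0) (nhds 0) := by
      have := (Real.continuous_sinh.sub continuous_id).tendsto 0
      simpa [Pi.sub_def] using this
    exact this.mono_left nhdsWithin_le_nhds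
  · have : Filter.Tendsto (fun t : ℝ => t ^ 3) (nhds 0) (nhds 0) := by
      simpa using (continuous_pow 3).tendsto (0:ℝ)
    exact this.mono_left nhdsWithin_le_nhds
  -- second L'Hopital
  apply HasDerivAt.lhopital_zero_nhdsGT
    (f' := fun t => Real.sinh t) (g' := fun t => 6 * t)
  · filter_upwards with t
    simpa using ((Real.hasDerivAt_cosh t).sub_const 1)
  · filter_upwards with t
    have := (hasDerivAt_pow 2 t).const_mul (3:ℝ)
    exact this.congr_deriv (by push_cast; ring)
  · filter_upwards [self_mem_nhdsWithin] with t ht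
    have : (0:ℝ) < t := ht
    positivity
  · have h1 : Filter.Tendsto (fun t : ℝ => Real.cosh t - 1) (nhds 0)
        (nhds (Real.cosh 0 - 1)) := (Real.continuous_cosh.tendsto 0).sub tendsto_const_nhds
    rw [Real.cosh_zero, sub_self] at h1
    exact h1.mono_left nhdsWithin_le_nhds
  · have h1 : Filter.Tendsto (fun t : ℝ => 3 * t ^ 2) (nhds 0)
        (nhds (3 * (0:ℝ) ^ 2)) := (tendsto_const_nhds.mul ((continuous_pow 2).tendsto 0))
    norm_num at h1
    exact h1.mono_left nhdsWithin_le_nhds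
  · have h : Filter.Tendsto (fun t : ℝ => (1 / 6) * (Real.sinh t / t))
        (nhdsWithin 0 (Set.Ioi 0)) (nhds (1/6 * 1)) := sinh_div_self_tendsto.const_mul _
    have he : (fun t : ℝ => (1 / 6) * (Real.sinh t / t))
        =ᶠ[nhdsWithin 0 (Set.Ioi 0)] fun t => Real.sinh t / (6 * t) := by
      filter_upwards [self_mem_nhdsWithin] with t ht
      have : (t:ℝ) ≠ 0 := ne_of_gt ht
      field_simp
    simpa using h.congr' he

lemma tendsto_mul_pos (a : ℝ) (ha : 0 < a) :
    Filter.Tendsto (fun x : ℝ => a * x) (nhdsWithin 0 (Set.Ioi 0))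
      (nhdsWithin 0 (Set.Ioi 0)) := by
  apply tendsto_nhdsWithin_of_tendsto_nhds_of_eventually_within
  · have : Filter.Tendsto (fun x : ℝ => a * x) (nhds 0) (nhds (a * 0)) :=
      (continuous_const.mul continuous_id).tendsto 0
    rw [mul_zero] at this
    exact this.mono_left nhdsWithin_le_nhds
  · filter_upwards [self_mem_nhdsWithin] with x hx
    exact mul_pos ha hx

lemma sinh_mul_div_self (a : ℝ) (ha : 0 < a) :
    Filter.Tendsto (fun x : ℝ => Real.sinh (a * x) / x)
      (nhdsWithin 0 (Set.Ioi 0)) (nhds a) := by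
  have h := (sinh_div_self_tendsto.comp (tendsto_mul_pos a ha)).const_mul a
  have he : (fun x : ℝ => a * ((fun t => Real.sinh t / t) ∘ (fun x => a * x)) x)
      =ᶠ[nhdsWithin 0 (Set.Ioi 0)] fun x => Real.sinh (a * x) / x := by
    filter_upwards [self_mem_nhdsWithin] with x hx
    have hx0 : x ≠ 0 := ne_of_gt hx
    have ha0 : a ≠ 0 := ne_of_gt ha
    simp only [Function.comp]
    field_simp
  simpa using h.congr' he

lemma sinh_sub_mul_div_cube (a : ℝ) (ha : 0 ≤ a) :
    Filter.Tendsto (fun x : ℝ => (Real.sinh (a * x) - a * x) / x ^ 3)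
      (nhdsWithin 0 (Set.Ioi 0)) (nhds (a ^ 3 / 6)) := by
  rcases eq_or_lt_of_le ha with h0 | hpos
  · simp [← h0]
  · have h := (sinh_sub_id_div_cube.comp (tendsto_mul_pos a hpos)).const_mul (a ^ 3)
    have he : (fun x : ℝ => a ^ 3 *
        ((fun t => (Real.sinh t - t) / t ^ 3) ∘ (fun x => a * x)) x)
        =ᶠ[nhdsWithin 0 (Set.Ioi 0)] fun x => (Real.sinh (a * x) - a * x) / x ^ 3 := by
      filter_upwards [self_mem_nhdsWithin] with x hx
      have hx0 : x ≠ 0 := ne_of_gt hx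
      have ha0 : a ≠ 0 := ne_of_gt hpos
      simp only [Function.comp, mul_pow]
      field_simp
    have := h.congr' he
    convert this using 2
    ring

theorem elliptic_integrand_limit_at_zero (p : ℕ) (hp : 1 ≤ p) :
    Filter.Tendsto (fun x : ℝ => ellipticIntegrand p x) (nhdsWithin 0 (Set.Ioi 0))
      (nhds (((p : ℝ) ^ 2 - 1) / (6 * p))) := by
  set q : ℝ := (p : ℝ) with hq
  have hq1 : (1:ℝ) ≤ q := by rw [hq]; exact_mod_cast hp
  have hq0 : (0:ℝ) < q := lt_of_lt_of_le one_pos hq1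
  -- numerator limit
  have hM : Filter.Tendsto (fun x : ℝ =>
      ((q - 1) * ((Real.sinh ((q + 1) * x) - (q + 1) * x) / x ^ 3)
        - (q + 1) * ((Real.sinh ((q - 1) * x) - (q - 1) * x) / x ^ 3)) / 2)
      (nhdsWithin 0 (Set.Ioi 0))
      (nhds (((q - 1) * ((q + 1) ^ 3 / 6) - (q + 1) * ((q - 1) ^ 3 / 6)) / 2)) := by
    exact (((sinh_sub_mul_div_cube (q + 1) (by linarith)).const_mul (q - 1)).sub
      ((sinh_sub_mul_div_cube (q - 1) (by linarith)).const_mul (q + 1))).div_const 2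
  have hN : Filter.Tendsto (fun x : ℝ =>
      2 * (Real.sinh x / x) *
      (((q - 1) * ((Real.sinh ((q + 1) * x) - (q + 1) * x) / x ^ 3)
        - (q + 1) * ((Real.sinh ((q - 1) * x) - (q - 1) * x) / x ^ 3)) / 2))
      (nhdsWithin 0 (Set.Ioi 0))
      (nhds (2 * 1 * (((q - 1) * ((q + 1) ^ 3 / 6) - (q + 1) * ((q - 1) ^ 3 / 6)) / 2))) := by
    have h1 : Filter.Tendsto (fun x : ℝ => Real.sinh x / x)
        (nhdsWithin 0 (Set.Ioi 0)) (nhds 1) := sinh_div_self_tendsto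
    exact (h1.const_mul 2).mul hM
  have hD : Filter.Tendsto (fun x : ℝ =>
      2 * q * (Real.sinh (q * x) / x) * (Real.sinh (2 * x) / x) * (Real.sinh x / x) ^ 2)
      (nhdsWithin 0 (Set.Ioi 0)) (nhds (2 * q * q * 2 * 1 ^ 2)) := by
    exact (((sinh_mul_div_self q hq0).const_mul (2 * q)).mul
      (sinh_mul_div_self 2 two_pos)).mul (sinh_div_self_tendsto.pow 2)
  have hDne : (2 * q * q * 2 * (1:ℝ) ^ 2) ≠ 0 := by positivity
  have hdiv := hN.div hD hDne
  have heq : (fun x : ℝ =>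
      (2 * (Real.sinh x / x) *
      (((q - 1) * ((Real.sinh ((q + 1) * x) - (q + 1) * x) / x ^ 3)
        - (q + 1) * ((Real.sinh ((q - 1) * x) - (q - 1) * x) / x ^ 3)) / 2)) /
      (2 * q * (Real.sinh (q * x) / x) * (Real.sinh (2 * x) / x) * (Real.sinh x / x) ^ 2))
      =ᶠ[nhdsWithin 0 (Set.Ioi 0)] fun x => ellipticIntegrand p x := by
    filter_upwards [self_mem_nhdsWithin] with x hx
    have hx0 : (0:ℝ) < x := hx
    have hxne : x ≠ 0 := ne_of_gt hx0
    have hsx : Real.sinh x ≠ 0 := ne_of_gt (Real.sinh_pos_iff.2 hx0)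
    have hsq : Real.sinh (q * x) ≠ 0 := ne_of_gt (Real.sinh_pos_iff.2 (mul_pos hq0 hx0))
    have hs2 : Real.sinh (2 * x) ≠ 0 := ne_of_gt (Real.sinh_pos_iff.2 (by linarith))
    have hcx : Real.cosh x ≠ 0 := ne_of_gt (Real.cosh_pos x)
    have e1 : (q + 1) * x = q * x + x := by ring
    have e2 : (q - 1) * x = q * x - x := by ring
    have hq0' : q ≠ 0 := ne_of_gt hq0
    rw [ellipticIntegrand, e1, e2, Real.sinh_add, Real.sinh_sub, Real.sinh_two_mul]
    rw [← hq]
    have hs2' : Real.sinh x * Real.cosh x ≠ 0 := mul_ne_zero hsx hcx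
    field_simp
    ring
  have := hdiv.congr' heq
  convert this using 2
  have hq0' : q ≠ 0 := ne_of_gt hq0
  field_simp
  ring
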